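/- Assume (A1)(a), assume the chain is irreducible under every stationary Markov policy, and assume the generalized Perron–Frobenius eigenvalue λ₁ᵈ is finite. Let D ⊆ S be a finite set and let (ρ, ψ) with ψ : S → [0,∞) nonzero and vanishing outside D satisfy min_{u∈𝕌(i)} [ e^{c(i,u)} Σ_{j∈S} ψ(j) P(j|i,u) ] = e^{ρ} ψ(i) for all i ∈ D. Then ρ ≤ λ₁ᵈ. -/
import Mathlib


/-!
Discrete-time controlled Markov chains on the countable state space `S = ℕ`,
with Borel action space `U`, admissible action sets `𝕌 i ⊆ U`, controlled
transition probabilities `P i u j = P(j | i, u)` (valued in `ℝ≥0∞`) and running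
cost `c i u = c(i,u)`.

Since admissible policies are deterministic measurable functions of the
history, and the actions appearing in a history are themselves determined by
the past states, an admissible policy is faithfully represented by a family of
maps of state-prefixes `ζ t : (Fin (t+1) → ℕ) → U`; measurability in the
history is automatic because state prefixes form a countable discrete space.
The trajectory law `P_i^ζ` is uniquely determined by its cylinder
probabilities, which are given explicitly by `pathWeight`; accordingly,
expectations of path functionals are given by explicit (countable) sums.
-/

open Filter Set
open scoped ENNReal NNReal Topology Classical

namespace RSDT

variable {U : Type*}

/-- The action chosen at time `t` under policy `ζ` along the state path `x`. -/
def act (ζ : ∀ t : ℕ, (Fin (t + 1) → ℕ) → U) (x : ℕ → ℕ) (t : ℕ) : U :=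
  ζ t fun s : Fin (t + 1) => x s.val

/-- Admissibility of a policy: all chosen actions lie in the admissible sets. -/
def IsAdmissible (𝕌 : ℕ → Set U) (ζ : ∀ t : ℕ, (Fin (t + 1) → ℕ) → U) : Prop :=
  ∀ (t : ℕ) (h : Fin (t + 1) → ℕ), ζ t h ∈ 𝕌 (h (Fin.last t))

/-- The stationary Markov policy attached to `v : S → U`. -/
def smPolicy (v : ℕ → U) : ∀ t : ℕ, (Fin (t + 1) → ℕ) → U :=
  fun t h => v (h (Fin.last t))

/-- The (time-dependent) Markov policy attached to `v : ℕ → S → U`. -/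
def mPolicy (v : ℕ → ℕ → U) : ∀ t : ℕ, (Fin (t + 1) → ℕ) → U :=
  fun t h => v t (h (Fin.last t))

/-- `v : S → U` is a stationary Markov selector for the action sets `𝕌`. -/
def IsSM (𝕌 : ℕ → Set U) (v : ℕ → U) : Prop := ∀ i, v i ∈ 𝕌 i

/-- Probability, under the trajectory law `P_i^ζ`, that the chain follows the
path `x` during its first `T` steps. -/
noncomputable def pathWeight (P : ℕ → U → ℕ → ℝ≥0∞)
    (ζ : ∀ t : ℕ, (Fin (t + 1) → ℕ) → U) (i T : ℕ) (x : ℕ → ℕ) : ℝ≥0∞ :=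
  (if x 0 = i then 1 else 0) * ∏ t ∈ Finset.range T, P (x t) (act ζ x t) (x (t + 1))

/-- Extension of a finite path to an infinite one (freezing the last state). -/
def extN (T : ℕ) (x : Fin (T + 1) → ℕ) : ℕ → ℕ :=
  fun n => x ⟨min n T, Nat.lt_succ_of_le (min_le_right n T)⟩

/-- `E_i^ζ [F(X_0, …, X_T)]` for a nonnegative functional `F` of the first
`T + 1` states. -/
noncomputable def pathExp (P : ℕ → U → ℕ → ℝ≥0∞)
    (ζ : ∀ t : ℕ, (Fin (t + 1) → ℕ) → U) (i T : ℕ) (F : (ℕ → ℕ) → ℝ≥0∞) : ℝ≥0∞ :=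
  ∑' x : Fin (T + 1) → ℕ, pathWeight P ζ i T (extN T x) * F (extN T x)

/-- The ergodic risk-sensitive cost
`𝓔_i(c,ζ) = limsup_{T→∞} (1/T) log E_i^ζ [exp (∑_{t<T} c(X_t, ζ_t))]`. -/
noncomputable def ergCost (P : ℕ → U → ℕ → ℝ≥0∞) (c : ℕ → U → ℝ)
    (ζ : ∀ t : ℕ, (Fin (t + 1) → ℕ) → U) (i : ℕ) : EReal :=
  Filter.limsup
    (fun T : ℕ => (((T : ℝ)⁻¹ : ℝ) : EReal) *
      ENNReal.log (pathExp P ζ i T fun x =>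
        ENNReal.ofReal (Real.exp (∑ t ∈ Finset.range T, c (x t) (act ζ x t)))))
    Filter.atTop

/-- The optimal value `λ* = inf_{i ∈ S} inf_{ζ ∈ 𝔘} 𝓔_i(c,ζ)`. -/
noncomputable def lamStar (P : ℕ → U → ℕ → ℝ≥0∞) (c : ℕ → U → ℝ) (𝕌 : ℕ → Set U) : EReal :=
  ⨅ (i : ℕ) (ζ : {ζ : ∀ t : ℕ, (Fin (t + 1) → ℕ) → U // IsAdmissible 𝕌 ζ}),
    ergCost P c ζ.1 i

/-- `E_i^ζ [ G(τ̆(B), X) ; τ̆(B) < ∞ ]`, where `τ̆(B) = inf {t > 0 : X_t ∈ B}`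
is the first hitting time of `B`. -/
noncomputable def hitExp (P : ℕ → U → ℕ → ℝ≥0∞)
    (ζ : ∀ t : ℕ, (Fin (t + 1) → ℕ) → U) (i : ℕ) (B : Set ℕ)
    (G : ℕ → (ℕ → ℕ) → ℝ≥0∞) : ℝ≥0∞ :=
  ∑' (m : ℕ) (x : Fin (m + 1 + 1) → ℕ),
    if extN (m + 1) x (m + 1) ∈ B ∧ ∀ t, 0 < t → t < m + 1 → extN (m + 1) x t ∉ B then
      pathWeight P ζ i (m + 1) (extN (m + 1) x) * G (m + 1) (extN (m + 1) x)
    else 0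

/-- `P_i^ζ (τ̆(B) < ∞)`. -/
noncomputable def hitProb (P : ℕ → U → ℕ → ℝ≥0∞)
    (ζ : ∀ t : ℕ, (Fin (t + 1) → ℕ) → U) (i : ℕ) (B : Set ℕ) : ℝ≥0∞ :=
  hitExp P ζ i B fun _ _ => 1

/-- Recurrence under a stationary Markov policy: from every state, every state
is hit with probability one. -/
def Recurrent (P : ℕ → U → ℕ → ℝ≥0∞) (v : ℕ → U) : Prop :=
  ∀ i j : ℕ, hitProb P (smPolicy v) i {j} = 1

/-- Irreducibility under a stationary Markov policy. -/
def Irreducible (P : ℕ → U → ℕ → ℝ≥0∞) (v : ℕ → U) : Prop :=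
  ∀ i j : ℕ, i ≠ j → ∃ n : ℕ, 0 < n ∧ ∃ x : ℕ → ℕ, x 0 = i ∧ x n = j ∧
    ∀ t < n, 0 < P (x t) (v (x t)) (x (t + 1))

/-- A function on the state space is norm-like (inf-compact) if all its
sublevel sets are finite (or empty). -/
def NormLike (g : ℕ → ℝ) : Prop := ∀ κ : ℝ, {i | g i ≤ κ}.Finite

/-- `max_{u ∈ 𝕌(i)} c(i, u)`. -/
noncomputable def maxCost (c : ℕ → U → ℝ) (𝕌 : ℕ → Set U) (i : ℕ) : ℝ :=
  sSup ((fun u => c i u) '' 𝕌 i)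

/-- `‖c‖_∞ = sup_{i ∈ S} sup_{u ∈ 𝕌(i)} c(i,u)`. -/
noncomputable def supCost (c : ℕ → U → ℝ) (𝕌 : ℕ → Set U) : ℝ :=
  sSup {r : ℝ | ∃ i, ∃ u ∈ 𝕌 i, c i u = r}

/-- The one-step minimized operator
`ψ ↦ min_{u ∈ 𝕌(i)} e^{c(i,u)} ∑_{j ∈ S} ψ(j) P(j|i,u)`. -/
noncomputable def minOp (P : ℕ → U → ℕ → ℝ≥0∞) (c : ℕ → U → ℝ)
    (𝕌 : ℕ → Set U) (ψ : ℕ → ℝ≥0∞) (i : ℕ) : ℝ≥0∞ :=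
  ⨅ u : 𝕌 i, ENNReal.ofReal (Real.exp (c i u.1)) * ∑' j, ψ j * P i u.1 j

/-- Structural standing assumptions on the discrete-time control model. -/
structure Model [TopologicalSpace U] [MeasurableSpace U]
    (P : ℕ → U → ℕ → ℝ≥0∞) (c : ℕ → U → ℝ) (𝕌 : ℕ → Set U) : Prop where
  nonempty : ∀ i, (𝕌 i).Nonempty
  compact : ∀ i, IsCompact (𝕌 i)
  prob : ∀ i, ∀ u ∈ 𝕌 i, ∑' j, P i u j = 1
  measP : ∀ i j, Measurable fun u => P i u j

/-- Assumption (A1)(a): continuity in the action variable. -/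
structure A1a [TopologicalSpace U] (P : ℕ → U → ℕ → ℝ≥0∞) (c : ℕ → U → ℝ)
    (𝕌 : ℕ → Set U) : Prop where
  cCont : ∀ i, ContinuousOn (fun u => c i u) (𝕌 i)
  PCont : ∀ (i : ℕ) (f : ℕ → ℝ), (∃ M, ∀ j, |f j| ≤ M) →
    ContinuousOn (fun u => ∑' j, f j * (P i u j).toReal) (𝕌 i)

/-- Assumption (A1)(b): from the reference state `i₀` every other state is
reached in one step with positive probability. -/
def A1b (P : ℕ → U → ℕ → ℝ≥0∞) (𝕌 : ℕ → Set U) (i₀ : ℕ) : Prop :=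
  ∀ j ≠ i₀, ∀ u ∈ 𝕌 i₀, 0 < P i₀ u j

/-- Foster–Lyapunov condition (A2)(a). -/
structure A2a (P : ℕ → U → ℕ → ℝ≥0∞) (c : ℕ → U → ℝ) (𝕌 : ℕ → Set U)
    (V : ℕ → ℝ≥0∞) (K : Finset ℕ) (Chat : ℝ≥0∞) (β : ℝ) : Prop where
  betaPos : 0 < β
  betaLtOne : β < 1
  ChatPos : 0 < Chat
  ChatFin : Chat ≠ ∞
  Vone : ∀ i, 1 ≤ V i
  Vfin : ∀ i, V i ≠ ∞
  lyap : ∀ i, ∀ u ∈ 𝕌 i,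
    ∑' j, V j * P i u j ≤ ENNReal.ofReal (1 - β) * V i + (if i ∈ K then Chat else 0)
  cBdd : ∃ M : ℝ, M < Real.log (1 / (1 - β)) ∧ ∀ i, ∀ u ∈ 𝕌 i, c i u ≤ M

/-- Foster–Lyapunov condition (A2)(b). -/
structure A2b (P : ℕ → U → ℕ → ℝ≥0∞) (c : ℕ → U → ℝ) (𝕌 : ℕ → Set U)
    (V : ℕ → ℝ≥0∞) (K : Finset ℕ) (Chat : ℝ≥0∞) (ℓ : ℕ → ℝ) : Prop where
  ChatPos : 0 < Chat
  ChatFin : Chat ≠ ∞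
  Vone : ∀ i, 1 ≤ V i
  Vfin : ∀ i, V i ≠ ∞
  ellNonneg : ∀ i, 0 ≤ ℓ i
  ellNormLike : NormLike ℓ
  lyap : ∀ i, ∀ u ∈ 𝕌 i,
    ∑' j, V j * P i u j ≤ (if i ∈ K then Chat else 0) + ENNReal.ofReal (Real.exp (-ℓ i)) * V i
  gap : NormLike fun i => ℓ i - maxCost c 𝕌 i

/-- Assumption (A2): irreducibility under every stationary Markov policy plus
one of the two Foster–Lyapunov drift conditions. -/
def A2 (P : ℕ → U → ℕ → ℝ≥0∞) (c : ℕ → U → ℝ) (𝕌 : ℕ → Set U) : Prop :=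
  (∀ v : ℕ → U, IsSM 𝕌 v → Irreducible P v) ∧
  ∃ (V : ℕ → ℝ≥0∞) (K : Finset ℕ) (Chat : ℝ≥0∞),
    (∃ β : ℝ, A2a P c 𝕌 V K Chat β) ∨ ∃ ℓ : ℕ → ℝ, A2b P c 𝕌 V K Chat ℓ

end RSDT

namespace RSDT

/-- The set of `λ ∈ ℝ` admitting a positive function `Ψ` with
`min_{u∈𝕌(i)} e^{c(i,u)} ∑_j Ψ(j) P(j|i,u) ≤ e^λ Ψ(i)` for all `i`; its
infimum is the generalized Perron–Frobenius eigenvalue `λ₁ᵈ`. -/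
def pfSet {U : Type*} (P : ℕ → U → ℕ → ℝ≥0∞) (c : ℕ → U → ℝ) (𝕌 : ℕ → Set U) : Set ℝ :=
  {lam : ℝ | ∃ Ψ : ℕ → ℝ≥0∞, (∀ i, 0 < Ψ i ∧ Ψ i ≠ ∞) ∧
    ∀ i, minOp P c 𝕌 Ψ i ≤ ENNReal.ofReal (Real.exp lam) * Ψ i}

/-- Lemma 4.1.  Any Dirichlet eigenvalue on a finite set is
dominated by the generalized Perron–Frobenius eigenvalue `λ₁ᵈ = sInf pfSet`. -/
theorem dirichlet_le_pf {U : Type*} [TopologicalSpace U] [MeasurableSpace U]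
    (P : ℕ → U → ℕ → ℝ≥0∞) (c : ℕ → U → ℝ) (𝕌 : ℕ → Set U)
    (hM : Model P c 𝕌) (hc : ∀ i, ∀ u ∈ 𝕌 i, 0 ≤ c i u) (hA1a : A1a P c 𝕌)
    (hirr : ∀ v : ℕ → U, IsSM 𝕌 v → Irreducible P v)
    (hne : (pfSet P c 𝕌).Nonempty) (hbdd : BddBelow (pfSet P c 𝕌))
    (D : Finset ℕ) (ρ : ℝ) (ψ : ℕ → ℝ≥0∞)
    (hψ0 : ∃ i, ψ i ≠ 0) (hψfin : ∀ i, ψ i ≠ ∞) (hψD : ∀ i ∉ D, ψ i = 0)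
    (heq : ∀ i ∈ D, minOp P c 𝕌 ψ i = ENNReal.ofReal (Real.exp ρ) * ψ i) :
    ρ ≤ sInf (pfSet P c 𝕌) := by
  refine le_csInf hne ?_
  rintro lam ⟨Ψ, hΨ, hle⟩
  obtain ⟨i0, hi0⟩ := hψ0
  have hi0D : i0 ∈ D := by
    by_contra h; exact hi0 (hψD i0 h)
  have hDne : D.Nonempty := ⟨i0, hi0D⟩
  obtain ⟨i1, hi1D, hi1⟩ := D.exists_mem_eq_sup' hDne (fun i => ψ i / Ψ i)
  set t : ℝ≥0∞ := ψ i1 / Ψ i1 with htdef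
  have htne : t ≠ ∞ := by
    rw [htdef, Ne, ENNReal.div_eq_top]
    push_neg
    exact ⟨fun _ => (hΨ i1).1.ne', fun h => absurd h (hψfin i1)⟩
  have ht0 : t ≠ 0 := by
    have hle0 : ψ i0 / Ψ i0 ≤ t := hi1 ▸ Finset.le_sup' (fun i => ψ i / Ψ i) hi0D
    intro h
    rw [h, le_zero_iff, ENNReal.div_eq_zero_iff] at hle0
    rcases hle0 with h' | h'
    · exact hi0 h'
    · exact (hΨ i0).2 h'
  have hpt : ∀ j, ψ j ≤ t * Ψ j := by
    intro j
    by_cases hj : j ∈ D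
    · have h2 : ψ j / Ψ j ≤ t := hi1 ▸ Finset.le_sup' (fun i => ψ i / Ψ i) hj
      rw [ENNReal.div_le_iff (ne_of_gt (hΨ j).1) (hΨ j).2] at h2
      exact h2
    · simp [hψD j hj]
  have hcancel : t * Ψ i1 = ψ i1 := ENNReal.div_mul_cancel (ne_of_gt (hΨ i1).1) (hΨ i1).2
  have hkey : ENNReal.ofReal (Real.exp ρ) * ψ i1 ≤ ENNReal.ofReal (Real.exp lam) * ψ i1 := by
    have h1 : minOp P c 𝕌 ψ i1 ≤ t * minOp P c 𝕌 Ψ i1 := by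
      unfold minOp
      rw [ENNReal.mul_iInf_of_ne ht0 htne]
      refine iInf_mono fun u => ?_
      calc ENNReal.ofReal (Real.exp (c i1 u.1)) * ∑' j, ψ j * P i1 u.1 j
          ≤ ENNReal.ofReal (Real.exp (c i1 u.1)) * ∑' j, t * Ψ j * P i1 u.1 j := by
            gcongr with j
            exact hpt j
        _ = t * (ENNReal.ofReal (Real.exp (c i1 u.1)) * ∑' j, Ψ j * P i1 u.1 j) := by
            simp_rw [mul_assoc t, ENNReal.tsum_mul_left]
            ring
    calc ENNReal.ofReal (Real.exp ρ) * ψ i1 = minOp P c 𝕌 ψ i1 := (heq i1 hi1D).symm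
      _ ≤ t * minOp P c 𝕌 Ψ i1 := h1
      _ ≤ t * (ENNReal.ofReal (Real.exp lam) * Ψ i1) := by gcongr; exact hle i1
      _ = ENNReal.ofReal (Real.exp lam) * (t * Ψ i1) := by ring
      _ = ENNReal.ofReal (Real.exp lam) * ψ i1 := by rw [hcancel]
  have hψi1 : ψ i1 ≠ 0 := by
    intro h
    exact ht0 (by rw [htdef, h, ENNReal.zero_div])
  have hexp : ENNReal.ofReal (Real.exp ρ) ≤ ENNReal.ofReal (Real.exp lam) :=
    (ENNReal.mul_le_mul_iff_left hψi1 (hψfin i1)).mp hkey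
  exact Real.exp_le_exp.mp ((ENNReal.ofReal_le_ofReal_iff (Real.exp_pos lam).le).mp hexp)

end RSDT
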